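/- Let β > 0 and k ≥ 2. For points 0 ≤ x₁ < x₂ < ⋯ < x_k ≤ 1 with gaps δᵢ = x_{i+1} - xᵢ, suppose D_β({x₁,…,x_k}) = 1 + Σ_{i=1}^{k-1} tanh(βδᵢ/2). Then among all k-point subsets of [0,1], D_β is uniquely maximized by the equally spaced set {0, 1/(k-1), 2/(k-1), …, 1}, with maximum value 1 + (k-1)·tanh(β/(2(k-1))). -/

import Mathlib

lemma tanh_hasDerivAt (x : ℝ) : HasDerivAt Real.tanh (1 - Real.tanh x ^ 2) x := by
  have h := (Real.hasDerivAt_sinh x).div (Real.hasDerivAt_cosh x) (Real.cosh_pos x).ne'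
  have hc := (Real.cosh_pos x).ne'
  have heq : (Real.cosh x * Real.cosh x - Real.sinh x * Real.sinh x) / Real.cosh x ^ 2
      = 1 - Real.tanh x ^ 2 := by
    rw [Real.tanh_eq_sinh_div_cosh]
    field_simp
  rw [heq] at h
  exact h.congr_of_eventuallyEq (by filter_upwards with y using Real.tanh_eq_sinh_div_cosh y)

lemma tanh_sq_lt_one (x : ℝ) : Real.tanh x ^ 2 < 1 := by
  rw [Real.tanh_eq_sinh_div_cosh, div_pow, div_lt_one (by positivity)]
  nlinarith [Real.cosh_sq_sub_sinh_sq x, Real.cosh_pos x]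

lemma tanh_strictMono : StrictMono Real.tanh :=
  strictMono_of_deriv_pos fun x => by
    rw [(tanh_hasDerivAt x).deriv]; linarith [tanh_sq_lt_one x]

lemma tanh_strictConcaveOn : StrictConcaveOn ℝ (Set.Ici 0) Real.tanh := by
  apply strictConcaveOn_of_deriv2_neg (convex_Ici 0)
    (fun x _ => (tanh_hasDerivAt x).continuousAt.continuousWithinAt)
  intro x hx
  rw [interior_Ici] at hx
  have hd : deriv Real.tanh = fun y => 1 - Real.tanh y ^ 2 :=
    funext fun y => (tanh_hasDerivAt y).deriv
  have h2 : HasDerivAt (fun y => 1 - Real.tanh y ^ 2)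
      (-(2 * Real.tanh x * (1 - Real.tanh x ^ 2))) x := by
    have := ((tanh_hasDerivAt x).pow 2).const_sub 1
    exact this.congr_deriv (by norm_num)
  have htpos : 0 < Real.tanh x := by
    rw [Real.tanh_eq_sinh_div_cosh]
    exact div_pos (Real.sinh_pos_iff.2 hx) (Real.cosh_pos x)
  have hiter : deriv^[2] Real.tanh x = -(2 * Real.tanh x * (1 - Real.tanh x ^ 2)) := by
    simp only [Function.iterate_succ, Function.iterate_zero, Function.comp_apply, id]
    rw [hd]; exact h2.deriv
  rw [hiter]
  nlinarith [tanh_sq_lt_one x]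

theorem stmt_4 (β : ℝ) (hβ : 0 < β) (n : ℕ) (hn : 1 ≤ n)
    (D : (Fin (n + 1) → ℝ) → ℝ)
    (hD : ∀ x : Fin (n + 1) → ℝ, StrictMono x → (∀ i, x i ∈ Set.Icc (0 : ℝ) 1) →
      D x = 1 + ∑ i : Fin n, Real.tanh (β * (x i.succ - x i.castSucc) / 2)) :
    let xstar : Fin (n + 1) → ℝ := fun i => (i : ℝ) / (n : ℝ)
    D xstar = 1 + (n : ℝ) * Real.tanh (β / (2 * (n : ℝ))) ∧
    (∀ x : Fin (n + 1) → ℝ, StrictMono x → (∀ i, x i ∈ Set.Icc (0 : ℝ) 1) →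
      D x ≤ D xstar ∧ (D x = D xstar → x = xstar)) := by
  intro xstar
  have hn0 : (0:ℝ) < n := by exact_mod_cast hn
  have hxsm : StrictMono xstar := by
    intro i j hij
    have : (i : ℝ) < (j : ℝ) := by exact_mod_cast hij
    exact div_lt_div_of_pos_right this hn0
  have hxsmem : ∀ i : Fin (n+1), xstar i ∈ Set.Icc (0:ℝ) 1 := by
    intro i
    constructor
    · positivity
    · rw [div_le_one hn0]
      exact_mod_cast Fin.is_le i
  have hstar : D xstar = 1 + (n : ℝ) * Real.tanh (β / (2 * (n : ℝ))) := by
    rw [hD xstar hxsm hxsmem]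
    congr 1
    have hterm : ∀ i : Fin n,
        Real.tanh (β * (xstar i.succ - xstar i.castSucc) / 2)
          = Real.tanh (β / (2 * (n:ℝ))) := by
      intro i
      congr 1
      show β * (((i : ℕ) + 1 : ℕ) / (n:ℝ) - (i : ℕ) / (n:ℝ)) / 2 = _
      push_cast
      rw [div_sub_div_same]
      norm_num
      ring
    rw [Finset.sum_congr rfl fun i _ => hterm i]
    simp [mul_comm]
  refine ⟨hstar, fun x hx hmem => ?_⟩
  -- notation
  set T := Real.tanh (β / (2 * (n:ℝ))) with hT
  set δ : Fin n → ℝ := fun i => x i.succ - x i.castSucc with hδ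
  set y : Fin n → ℝ := fun i => β * δ i / 2 with hy
  have hδpos : ∀ i, 0 < δ i := fun i => sub_pos.2 (hx (Fin.castSucc_lt_succ (i := i)))
  -- telescoping sum
  have hfin : ∀ j : ℕ, j ≤ n → j < n + 1 := fun j h => Nat.lt_succ_of_le h
  set f : ℕ → ℝ := fun j => x ⟨min j n, hfin _ (min_le_right _ _)⟩ with hf
  have hsumδ : ∑ i : Fin n, δ i = x (Fin.last n) - x 0 := by
    have hstep : ∀ i : Fin n, δ i = f ((i : ℕ) + 1) - f (i : ℕ) := by
      intro i
      have h1 : min ((i:ℕ)+1) n = (i:ℕ)+1 := min_eq_left i.isLt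
      have h2 : min (i:ℕ) n = (i:ℕ) := min_eq_left (le_of_lt i.isLt)
      simp only [hδ, hf]
      congr 2 <;> exact Fin.ext (by simp [h1, h2])
    calc ∑ i : Fin n, δ i = ∑ i : Fin n, (f ((i:ℕ)+1) - f (i:ℕ)) :=
          Finset.sum_congr rfl fun i _ => hstep i
      _ = ∑ i ∈ Finset.range n, (f (i+1) - f i) :=
          Fin.sum_univ_eq_sum_range (fun j => f (j+1) - f j) n
      _ = f n - f 0 := Finset.sum_range_sub f n
      _ = x (Fin.last n) - x 0 := by
          simp only [hf]
          congr 2 <;> exact Fin.ext (by simp)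
  have hd_le : x (Fin.last n) - x 0 ≤ 1 := by
    have h1 := (hmem (Fin.last n)).2
    have h2 := (hmem 0).1
    linarith
  set d : ℝ := x (Fin.last n) - x 0 with hdd
  have hsumy : ∑ i : Fin n, y i = β * d / 2 := by
    simp only [hy]
    rw [← Finset.sum_div, ← Finset.mul_sum, hsumδ]
  -- Jensen
  have hw : ∑ _i : Fin n, (n:ℝ)⁻¹ = 1 := by
    simp [Finset.sum_const, Finset.card_univ]
    field_simp
  have hwpos : ∀ i ∈ (Finset.univ : Finset (Fin n)), (0:ℝ) < (n:ℝ)⁻¹ :=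
    fun i _ => by positivity
  have hymem : ∀ i ∈ (Finset.univ : Finset (Fin n)), y i ∈ Set.Ici (0:ℝ) := by
    intro i _
    have := hδpos i
    simp only [hy, Set.mem_Ici]
    positivity
  have hJ := tanh_strictConcaveOn.concaveOn.le_map_sum
    (fun i hi => (hwpos i hi).le) hw hymem
  simp only [smul_eq_mul] at hJ
  set S := ∑ i : Fin n, Real.tanh (y i) with hS
  have hJ1 : (n:ℝ)⁻¹ * S ≤ Real.tanh ((n:ℝ)⁻¹ * (β * d / 2)) := by
    calc (n:ℝ)⁻¹ * S = ∑ i : Fin n, (n:ℝ)⁻¹ * Real.tanh (y i) := by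
          rw [hS, Finset.mul_sum]
      _ ≤ Real.tanh (∑ i : Fin n, (n:ℝ)⁻¹ * y i) := hJ
      _ = Real.tanh ((n:ℝ)⁻¹ * (β * d / 2)) := by rw [← Finset.mul_sum, hsumy]
  have harg_le : (n:ℝ)⁻¹ * (β * d / 2) ≤ β / (2 * (n:ℝ)) := by
    have key : (n:ℝ)⁻¹ * (β * d / 2) = β * d / (2 * (n:ℝ)) := by
      ring
    rw [key]
    gcongr
    nlinarith
  have hJ2 : (n:ℝ)⁻¹ * S ≤ T :=
    hJ1.trans (tanh_strictMono.monotone harg_le)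
  have hSle : S ≤ (n:ℝ) * T := by
    have := mul_le_mul_of_nonneg_left hJ2 hn0.le
    rwa [← mul_assoc, mul_inv_cancel₀ hn0.ne', one_mul] at this
  have hDx : D x = 1 + S := by
    rw [hD x hx hmem]
  constructor
  · rw [hDx, hstar]; linarith
  · intro heqD
    rw [hDx, hstar] at heqD
    have hSeq : S = (n:ℝ) * T := by linarith
    have haT : (n:ℝ)⁻¹ * S = T := by
      rw [hSeq, ← mul_assoc, inv_mul_cancel₀ hn0.ne', one_mul]
    -- the middle term equals T too
    have hbT : Real.tanh ((n:ℝ)⁻¹ * (β * d / 2)) = T := by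
      have hle := tanh_strictMono.monotone harg_le
      linarith [hJ1, haT.ge, haT.le]
    have hd1 : d = 1 := by
      rw [hT] at hbT
      have harg : (n:ℝ)⁻¹ * (β * d / 2) = β / (2 * (n:ℝ)) :=
        tanh_strictMono.injective hbT
      field_simp at harg
      have h4 : (β * (2 * (n:ℝ))) * (d - 1) = 0 := by linear_combination (β * (2 * (n:ℝ))) * harg
      rcases mul_eq_zero.1 h4 with h | h
      · exact absurd h (by positivity)
      · linarith
    -- Jensen equality: all y equal
    have hyeq : ∀ j : Fin n, ∀ k : Fin n, y j = y k := by
      have h_eq : Real.tanh (∑ i : Fin n, (n:ℝ)⁻¹ • y i)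
          ≤ ∑ i : Fin n, (n:ℝ)⁻¹ • Real.tanh (y i) := by
        have e1 : ∑ i : Fin n, (n:ℝ)⁻¹ • y i = (n:ℝ)⁻¹ * (β * d / 2) := by
          simp only [smul_eq_mul]; rw [← Finset.mul_sum, hsumy]
        have e2 : ∑ i : Fin n, (n:ℝ)⁻¹ • Real.tanh (y i) = (n:ℝ)⁻¹ * S := by
          simp only [smul_eq_mul, ← Finset.mul_sum]
          rfl
        rw [e1, e2, hbT]
        exact haT.ge
      have := tanh_strictConcaveOn.eq_of_map_sum_eq hwpos hw hymem h_eq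
      exact fun j k => this (Finset.mem_univ j) (Finset.mem_univ k)
    have hδconst : ∀ j : Fin n, δ j = 1 / (n:ℝ) := by
      intro j
      have hsum1 : ∑ i : Fin n, δ i = 1 := by rw [hsumδ, hd1]
      have hall : ∀ i : Fin n, δ i = δ j := by
        intro i
        have := hyeq i j
        simp only [hy] at this
        have hβ' : β ≠ 0 := hβ.ne'
        field_simp at this
        show x i.succ - x i.castSucc = x j.succ - x j.castSucc
        linarith
      rw [Finset.sum_congr rfl fun i _ => hall i] at hsum1
      simp [Finset.sum_const, Finset.card_univ] at hsum1
      field_simp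
      linarith [hsum1]
    have hx0 : x 0 = 0 := by
      have h1 := (hmem (Fin.last n)).2
      have h2 := (hmem 0).1
      have : x (Fin.last n) - x 0 = 1 := hd1
      linarith
    have hval : ∀ j : ℕ, (hj : j ≤ n) → x ⟨j, hfin j hj⟩ = (j:ℝ) / (n:ℝ) := by
      intro j
      induction j with
      | zero => intro _; simpa using hx0
      | succ m ih =>
        intro hj
        have hm : m ≤ n := le_of_lt hj
        have hmn : m < n := hj
        have hgap := hδconst ⟨m, hmn⟩
        simp only [hδ] at hgap
        have hsucc : (⟨m, hmn⟩ : Fin n).succ = ⟨m+1, hfin _ hj⟩ := Fin.ext (by simp)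
        have hcs : (⟨m, hmn⟩ : Fin n).castSucc = ⟨m, hfin _ hm⟩ := Fin.ext (by simp)
        rw [hsucc, hcs] at hgap
        rw [show x ⟨m+1, hfin _ hj⟩ = x ⟨m, hfin _ hm⟩ + 1/(n:ℝ) by linarith [ih hm],
          ih hm]
        push_cast
        field_simp
    funext i
    have hi : (i:ℕ) ≤ n := Fin.is_le i
    have := hval i hi
    have hieq : i = ⟨(i:ℕ), hfin _ hi⟩ := Fin.ext rfl
    rw [hieq, this]
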